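/- Let h: ℝ × ℝ → ℝ be C¹ in x with h and h_x bounded and uniformly continuous on ℝ × K for every compact K. If x̃: ℝ → ℝ is a bounded solution of x' = h(t,x) whose variational equation z' = h_x(t, x̃(t)) z has an exponential dichotomy with stable direction (i.e., there exist k ≥ 1, β > 0 with exp(∫_s^t h_x(r, x̃(r)) dr) ≤ k e^{-β(t-s)} for all t ≥ s), then x̃ is locally uniformly exponentially attractive: there exist δ > 0, C ≥ 1 such that any solution x(t) with |x(s) - x̃(s)| < δ for some s satisfies |x(t) - x̃(t)| ≤ C e^{-(β/2)(t-s)} |x(s) - x̃(s)| for all t ≥ s. -/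

import Mathlib

/-- First Approximation Theorem. An attractive hyperbolic bounded solution
(exponential dichotomy with stable direction of the variational equation) is locally
uniformly exponentially attractive forward in time. -/
theorem first_approximation_attractive
    (h hx : ℝ → ℝ → ℝ)
    (hcont : Continuous fun p : ℝ × ℝ => h p.1 p.2)
    (hderiv : ∀ t x, HasDerivAt (h t) (hx t x) x)
    (hxcont : Continuous fun p : ℝ × ℝ => hx p.1 p.2)
    (hbd : ∀ K : Set ℝ, IsCompact K → ∃ M : ℝ, ∀ t : ℝ, ∀ x ∈ K,
      |h t x| ≤ M ∧ |hx t x| ≤ M)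
    (hucont : ∀ K : Set ℝ, IsCompact K →
      UniformContinuousOn (fun p : ℝ × ℝ => h p.1 p.2) (Set.univ ×ˢ K) ∧
      UniformContinuousOn (fun p : ℝ × ℝ => hx p.1 p.2) (Set.univ ×ˢ K))
    (xtil : ℝ → ℝ)
    (hsol : ∀ t, HasDerivAt xtil (h t (xtil t)) t)
    (hbdd : ∃ M : ℝ, ∀ t, |xtil t| ≤ M)
    (k β : ℝ) (hk : 1 ≤ k) (hβ : 0 < β)
    (hdich : ∀ s t : ℝ, s ≤ t →
      Real.exp (∫ r in s..t, hx r (xtil r)) ≤ k * Real.exp (-β * (t - s))) :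
    ∃ δ > 0, ∃ C : ℝ, 1 ≤ C ∧
      ∀ x : ℝ → ℝ, (∀ t, HasDerivAt x (h t (x t)) t) →
        ∀ s : ℝ, |x s - xtil s| < δ →
          ∀ t ≥ s, |x t - xtil t| ≤ C * Real.exp (-(β / 2) * (t - s)) * |x s - xtil s| := by
  classical
  obtain ⟨M₀, hM₀⟩ := hbdd
  have hM0 : 0 ≤ M₀ := le_trans (abs_nonneg _) (hM₀ 0)
  set K : Set ℝ := Set.Icc (-(M₀ + 1)) (M₀ + 1) with hKdef
  have hKc : IsCompact K := isCompact_Icc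
  have hxtilK : ∀ t, xtil t ∈ K := by
    intro t
    have := abs_le.mp (hM₀ t)
    constructor <;> linarith [this.1, this.2]
  obtain ⟨-, hUC⟩ := hucont K hKc
  rw [Metric.uniformContinuousOn_iff] at hUC
  obtain ⟨δ₁, hδ₁pos, hδ₁⟩ := hUC (β / 2) (by positivity)
  set η : ℝ := min (δ₁ / 2) 1 with hηdef
  have hηpos : 0 < η := lt_min (by positivity) one_pos
  have hηδ₁ : η < δ₁ := lt_of_le_of_lt (min_le_left _ _) (by linarith)
  have hη1 : η ≤ 1 := min_le_right _ _
  have hkpos : 0 < k := lt_of_lt_of_le one_pos hk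
  refine ⟨η / k, by positivity, k, hk, ?_⟩
  intro x hxsol s hδs t hts
  have hxtc : Continuous xtil := continuous_iff_continuousAt.mpr fun t => (hsol t).continuousAt
  have hxc : Continuous x := continuous_iff_continuousAt.mpr fun t => (hxsol t).continuousAt
  set y : ℝ → ℝ := fun t => x t - xtil t with hydef
  have hyc : Continuous y := hxc.sub hxtc
  have hacont : Continuous (fun r : ℝ => hx r (xtil r)) :=
    hxcont.comp (continuous_id.prodMk hxtc)
  -- the key pointwise inequality obtained from the mean value theorem
  have hMVT : ∀ r : ℝ, |y r| ≤ η →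
      y r * (h r (x r) - h r (xtil r)) ≤ (hx r (xtil r) + β / 2) * (y r) ^ 2 := by
    intro r hyr
    have hbnd : ∀ ξ : ℝ, |ξ - xtil r| ≤ η → hx r ξ ≤ hx r (xtil r) + β / 2 := by
      intro ξ hξ
      have hξK : ξ ∈ K := by
        have h1 := abs_le.mp hξ
        have h2 := abs_le.mp (hM₀ r)
        constructor <;> linarith [h1.1, h1.2, h2.1, h2.2, hη1]
      have hmem1 : ((r, ξ) : ℝ × ℝ) ∈ Set.univ ×ˢ K := ⟨Set.mem_univ _, hξK⟩
      have hmem2 : ((r, xtil r) : ℝ × ℝ) ∈ Set.univ ×ˢ K := ⟨Set.mem_univ _, hxtilK r⟩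
      have hdist : dist ((r, ξ) : ℝ × ℝ) (r, xtil r) < δ₁ := by
        rw [Prod.dist_eq]
        simp only [dist_self]
        refine max_lt hδ₁pos ?_
        rw [Real.dist_eq]
        exact lt_of_le_of_lt hξ hηδ₁
      have := hδ₁ _ hmem1 _ hmem2 hdist
      rw [Real.dist_eq] at this
      have := abs_le.mp this.le
      linarith [this.1, this.2]
    rcases eq_or_ne (y r) 0 with h0 | h0
    · have hxeq : x r = xtil r := by
        have : x r - xtil r = 0 := h0
        linarith
      simp [hxeq, h0]
    · have key : h r (x r) - h r (xtil r) = hx r ((if xtil r < x r then 1 else 0) * 0 + 0) ∨ True :=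
        Or.inr trivial
      clear key
      rcases lt_or_gt_of_ne (fun he : xtil r = x r => h0 (by simp [hydef, he])) with hlt | hgt
      · -- xtil r < x r
        obtain ⟨ξ, hξmem, hξ⟩ := exists_hasDerivAt_eq_slope (h r) (hx r) hlt
          (Continuous.continuousOn (hcont.comp (continuous_const.prodMk continuous_id)))
          (fun z _ => hderiv r z)
        have hne : x r - xtil r ≠ 0 := sub_ne_zero.mpr (ne_of_gt hlt)
        have hΔ : h r (x r) - h r (xtil r) = hx r ξ * y r := by
          rw [hξ]; field_simp [hydef]; rfl
        have hξclose : |ξ - xtil r| ≤ η := by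
          have h1 : xtil r < ξ := hξmem.1
          have h2 : ξ < x r := hξmem.2
          rw [abs_of_pos (by linarith)]
          have : y r ≤ |y r| := le_abs_self _
          simp only [hydef] at this ⊢
          linarith
        have hb := hbnd ξ hξclose
        rw [hΔ]
        have hsq : y r * (hx r ξ * y r) = hx r ξ * (y r) ^ 2 := by ring
        rw [hsq]
        exact mul_le_mul_of_nonneg_right hb (sq_nonneg _)
      · -- x r < xtil r
        obtain ⟨ξ, hξmem, hξ⟩ := exists_hasDerivAt_eq_slope (h r) (hx r) hgt
          (Continuous.continuousOn (hcont.comp (continuous_const.prodMk continuous_id)))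
          (fun z _ => hderiv r z)
        have hne : xtil r - x r ≠ 0 := sub_ne_zero.mpr (ne_of_gt hgt)
        have hΔ : h r (x r) - h r (xtil r) = hx r ξ * y r := by
          have : hx r ξ * (xtil r - x r) = h r (xtil r) - h r (x r) := by
            rw [hξ]; field_simp
          simp only [hydef]
          linarith [this]
        have hξclose : |ξ - xtil r| ≤ η := by
          have h1 : x r < ξ := hξmem.1
          have h2 : ξ < xtil r := hξmem.2
          rw [abs_of_nonpos (by linarith)]
          have : -(y r) ≤ |y r| := neg_le_abs _
          simp only [hydef] at this ⊢
          linarith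
        have hb := hbnd ξ hξclose
        rw [hΔ]
        have hsq : y r * (hx r ξ * y r) = hx r ξ * (y r) ^ 2 := by ring
        rw [hsq]
        exact mul_le_mul_of_nonneg_right hb (sq_nonneg _)
  -- the key Gronwall-type estimate
  have key : ∀ T : ℝ, s ≤ T → (∀ r ∈ Set.Ioo s T, |y r| ≤ η) →
      |y T| ≤ k * Real.exp (-(β / 2) * (T - s)) * |y s| := by
    intro T hsT hsmall
    set A : ℝ → ℝ := fun u => ∫ r in s..u, hx r (xtil r) with hAdef
    have hA : ∀ u, HasDerivAt A (hx u (xtil u)) u := by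
      intro u
      exact intervalIntegral.integral_hasDerivAt_right
        (hacont.intervalIntegrable _ _)
        (hacont.stronglyMeasurableAtFilter _ _)
        hacont.continuousAt
    have hAc : Continuous A := continuous_iff_continuousAt.mpr fun u => (hA u).continuousAt
    set F : ℝ → ℝ := fun u => (y u) ^ 2 * Real.exp (-(2 * A u) - β * (u - s)) with hFdef
    have hyd : ∀ u, HasDerivAt y (h u (x u) - h u (xtil u)) u :=
      fun u => (hxsol u).sub (hsol u)
    have hFd : ∀ u, HasDerivAt F
        ((2 * y u * (h u (x u) - h u (xtil u))) * Real.exp (-(2 * A u) - β * (u - s)) +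
          (y u) ^ 2 * (Real.exp (-(2 * A u) - β * (u - s)) * (-(2 * hx u (xtil u)) - β))) u := by
      intro u
      have h1 : HasDerivAt (fun u => (y u) ^ 2) (2 * y u * (h u (x u) - h u (xtil u))) u := by
        have := (hyd u).fun_pow 2
        simpa [mul_comm, mul_assoc, mul_left_comm] using this
      have h2 : HasDerivAt (fun u => -(2 * A u) - β * (u - s)) (-(2 * hx u (xtil u)) - β) u := by
        have ha : HasDerivAt (fun u => -(2 * A u)) (-(2 * hx u (xtil u))) u :=
          (((hA u).const_mul 2)).neg
        have hb : HasDerivAt (fun u : ℝ => β * (u - s)) β u := by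
          simpa using ((hasDerivAt_id u).sub_const s).const_mul β
        exact ha.sub hb
      exact h1.mul h2.exp
    have hFc : Continuous F :=
      (hyc.pow 2).mul (Real.continuous_exp.comp
        (((continuous_const.mul hAc).neg).sub
          (continuous_const.mul (continuous_id.sub continuous_const))))
    have hd_nonpos : ∀ u ∈ interior (Set.Icc s T), deriv F u ≤ 0 := by
      intro u hu
      rw [interior_Icc] at hu
      rw [(hFd u).deriv]
      have hyu : |y u| ≤ η := hsmall u hu
      have hineq := hMVT u hyu
      have hE : 0 < Real.exp (-(2 * A u) - β * (u - s)) := Real.exp_pos _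
      set E := Real.exp (-(2 * A u) - β * (u - s))
      have : (2 * y u * (h u (x u) - h u (xtil u))) * E +
          (y u) ^ 2 * (E * (-(2 * hx u (xtil u)) - β)) =
          E * (2 * (y u * (h u (x u) - h u (xtil u))) -
            (2 * hx u (xtil u) + β) * (y u) ^ 2) := by ring
      rw [this]
      apply mul_nonpos_of_nonneg_of_nonpos hE.le
      have h2 := mul_le_mul_of_nonneg_left hineq (by norm_num : (0:ℝ) ≤ 2)
      have h3 : 2 * ((hx u (xtil u) + β / 2) * y u ^ 2) =
          (2 * hx u (xtil u) + β) * y u ^ 2 := by ring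
      ring_nf at h2 h3 ⊢
      linarith [h2, h3]
    have hanti : AntitoneOn F (Set.Icc s T) := by
      apply antitoneOn_of_deriv_nonpos (convex_Icc s T) hFc.continuousOn
      · intro u hu
        exact ((hFd u).differentiableAt).differentiableWithinAt
      · exact hd_nonpos
    have hFT : F T ≤ F s :=
      hanti (Set.left_mem_Icc.mpr hsT) (Set.right_mem_Icc.mpr hsT) hsT
    have hFs : F s = (y s) ^ 2 := by
      simp [hFdef, hAdef, intervalIntegral.integral_same]
    rw [hFs] at hFT
    -- hFT : (y T)^2 * exp(-(2 A T) - β (T - s)) ≤ (y s)^2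
    set v : ℝ := k * Real.exp (-(β / 2) * (T - s)) * |y s| with hvdef
    have hv0 : 0 ≤ v := by positivity
    have hsq : (y T) ^ 2 ≤ v ^ 2 := by
      have hEA : Real.exp (A T) ≤ k * Real.exp (-β * (T - s)) := hdich s T hsT
      have hEA0 : 0 < Real.exp (A T) := Real.exp_pos _
      have sq_exp : ∀ z : ℝ, Real.exp z ^ 2 = Real.exp (2 * z) := by
        intro z; rw [pow_two, ← Real.exp_add, two_mul]
      have hexp_id : Real.exp (-(2 * A T) - β * (T - s)) =
          (Real.exp (-(β / 2) * (T - s))) ^ 2 / ((Real.exp (A T)) ^ 2) := by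
        rw [eq_div_iff (by positivity), sq_exp, sq_exp, ← Real.exp_add, Real.exp_eq_exp]
        ring
      simp only [hFdef] at hFT
      rw [hexp_id] at hFT
      have hE2 : (Real.exp (A T)) ^ 2 ≤ (k * Real.exp (-β * (T - s))) ^ 2 := by
        apply sq_le_sq' _ hEA
        nlinarith [hEA0]
      have hstep : (y T) ^ 2 * (Real.exp (-(β / 2) * (T - s))) ^ 2 ≤
          (y s) ^ 2 * (Real.exp (A T)) ^ 2 := by
        have := mul_le_mul_of_nonneg_right hFT (sq_nonneg (Real.exp (A T)))
        calc (y T) ^ 2 * (Real.exp (-(β / 2) * (T - s))) ^ 2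
            = (y T) ^ 2 * ((Real.exp (-(β / 2) * (T - s))) ^ 2 / ((Real.exp (A T)) ^ 2)) *
              (Real.exp (A T)) ^ 2 := by field_simp
          _ ≤ (y s) ^ 2 * (Real.exp (A T)) ^ 2 := this
      have hstep2 : (y s) ^ 2 * (Real.exp (A T)) ^ 2 ≤
          (y s) ^ 2 * (k * Real.exp (-β * (T - s))) ^ 2 :=
        mul_le_mul_of_nonneg_left hE2 (sq_nonneg _)
      have hexp_id2 : (k * Real.exp (-β * (T - s))) ^ 2 =
          (k * Real.exp (-(β / 2) * (T - s))) ^ 2 * Real.exp (-β * (T - s)) := by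
        rw [mul_pow, mul_pow, sq_exp, sq_exp, mul_assoc, ← Real.exp_add]
        congr 2
        ring
      have hfin : (y T) ^ 2 * (Real.exp (-(β / 2) * (T - s))) ^ 2 ≤
          (y s) ^ 2 * (k * Real.exp (-(β / 2) * (T - s))) ^ 2 * Real.exp (-β * (T - s)) := by
        calc (y T) ^ 2 * (Real.exp (-(β / 2) * (T - s))) ^ 2
            ≤ (y s) ^ 2 * (k * Real.exp (-β * (T - s))) ^ 2 := le_trans hstep hstep2
          _ = (y s) ^ 2 * (k * Real.exp (-(β / 2) * (T - s))) ^ 2 *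
              Real.exp (-β * (T - s)) := by rw [hexp_id2]; ring
      have hexp_id3 : Real.exp (-β * (T - s)) = (Real.exp (-(β / 2) * (T - s))) ^ 2 := by
        rw [sq_exp, Real.exp_eq_exp]
        ring
      rw [hexp_id3] at hfin
      have hEp : 0 < (Real.exp (-(β / 2) * (T - s))) ^ 2 := by positivity
      have : (y T) ^ 2 ≤ (y s) ^ 2 * (k * Real.exp (-(β / 2) * (T - s))) ^ 2 := by
        have := le_of_mul_le_mul_right (by linarith [hfin] :
          (y T) ^ 2 * (Real.exp (-(β / 2) * (T - s))) ^ 2 ≤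
          ((y s) ^ 2 * (k * Real.exp (-(β / 2) * (T - s))) ^ 2) *
            (Real.exp (-(β / 2) * (T - s))) ^ 2) hEp
        linarith
      calc (y T) ^ 2 ≤ (y s) ^ 2 * (k * Real.exp (-(β / 2) * (T - s))) ^ 2 := this
        _ = v ^ 2 := by rw [hvdef, mul_pow, mul_pow, sq_abs]; ring
    calc |y T| = Real.sqrt ((y T) ^ 2) := (Real.sqrt_sq_eq_abs _).symm
      _ ≤ Real.sqrt (v ^ 2) := Real.sqrt_le_sqrt hsq
      _ = |v| := Real.sqrt_sq_eq_abs _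
      _ = v := abs_of_nonneg hv0
  -- bootstrap: |y| stays below η on [s, ∞)
  have hys : |y s| < η / k := hδs
  have main : ∀ u, s ≤ u → |y u| < η := by
    intro u hsu
    by_contra hcon
    push_neg at hcon
    set B : Set ℝ := {r | r ∈ Set.Icc s u ∧ η ≤ |y r|} with hBdef
    have hBne : B.Nonempty := ⟨u, ⟨hsu, le_refl u⟩, hcon⟩
    have hBc : IsClosed B := by
      have : B = Set.Icc s u ∩ {r | η ≤ |y r|} := by
        ext r; simp [hBdef, Set.mem_setOf_eq, Set.mem_inter_iff]
      rw [this]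
      exact isClosed_Icc.inter (isClosed_le continuous_const hyc.abs)
    have hBbdd : BddBelow B := ⟨s, fun r hr => hr.1.1⟩
    set T := sInf B with hTdef
    have hTB : T ∈ B := hBc.csInf_mem hBne hBbdd
    have hsTle : s ≤ T := hTB.1.1
    have hηT : η ≤ |y T| := hTB.2
    have hsmall : ∀ r ∈ Set.Ioo s T, |y r| ≤ η := by
      intro r hr
      by_contra hbad
      push_neg at hbad
      have hrB : r ∈ B := ⟨⟨hr.1.le, le_trans hr.2.le hTB.1.2⟩, hbad.le⟩
      exact absurd (csInf_le hBbdd hrB) (not_le.mpr hr.2)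
    have hest := key T hsTle hsmall
    have hexp1 : Real.exp (-(β / 2) * (T - s)) ≤ 1 := by
      rw [Real.exp_le_one_iff]
      nlinarith
    have : |y T| ≤ k * |y s| := by
      calc |y T| ≤ k * Real.exp (-(β / 2) * (T - s)) * |y s| := hest
        _ ≤ k * 1 * |y s| := by
            apply mul_le_mul_of_nonneg_right _ (abs_nonneg _)
            exact mul_le_mul_of_nonneg_left hexp1 hkpos.le
        _ = k * |y s| := by ring
    have hklt : k * |y s| < η := by
      have h2 : k * |y s| < k * (η / k) := mul_lt_mul_of_pos_left hys hkpos
      have h3 : k * (η / k) = η := by field_simp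
      linarith
    linarith
  exact key t hts fun r hr => (main r hr.1.le).le
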